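/- Let k be a field of characteristic 2 and consider the 5×5 matrix H over k with rows (a₂, 0, a₁, a₇, a₆), (0, a₄, a₅, a₁₁, a₁₀), (a₄, a₂, a₃, a₉, a₈), (1, 0, 0, 0, 1), (0, 1, 0, b₁, 0). If rank(H) ≤ 2, then a₁ = a₃ = a₅ = a₇ = a₁₀ = 0, a₄ = a₈, a₂ = a₆, b₁·a₄ = a₁₁, and b₁·a₂ = a₉. -/

import Mathlib

lemma aux_rank_submatrix_le {k : Type*} [Field k] {m n : ℕ}
    (f g : Fin m → Fin n) (A : Matrix (Fin n) (Fin n) k) :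
    (A.submatrix f g).rank ≤ A.rank := by
  have h1 : ((1 : Matrix (Fin n) (Fin n) k).submatrix f (Equiv.refl (Fin n))) * A
      = A.submatrix f id := by
    rw [Matrix.one_submatrix_mul]; rfl
  have h2 : (A.submatrix f id) * ((1 : Matrix (Fin n) (Fin n) k).submatrix (Equiv.refl (Fin n)) g)
      = A.submatrix f g := by
    rw [Matrix.mul_submatrix_one]
    simp [Matrix.submatrix_submatrix]
  calc (A.submatrix f g).rank
      = ((A.submatrix f id) * ((1 : Matrix (Fin n) (Fin n) k).submatrix (Equiv.refl (Fin n)) g)).rank := by rw [h2]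
    _ ≤ (A.submatrix f id).rank := Matrix.rank_mul_le_left _ _
    _ = (((1 : Matrix (Fin n) (Fin n) k).submatrix f (Equiv.refl (Fin n))) * A).rank := by rw [h1]
    _ ≤ A.rank := Matrix.rank_mul_le_right _ _

lemma aux_minor_det_zero {k : Type*} [Field k]
    (f g : Fin 3 → Fin 5) (A : Matrix (Fin 5) (Fin 5) k) (h : A.rank ≤ 2) :
    (A.submatrix f g).det = 0 := by
  by_contra hd
  have hu : IsUnit (A.submatrix f g) :=
    (Matrix.isUnit_iff_isUnit_det _).mpr (isUnit_iff_ne_zero.mpr hd)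
  have := Matrix.rank_of_isUnit _ hu
  have hle := (aux_rank_submatrix_le f g A).trans h
  rw [this] at hle
  simp [Fintype.card_fin] at hle

/-- Over a field k of characteristic 2, for the explicit 5×5 matrix H below,
rank(H) ≤ 2 implies a₁ = a₃ = a₅ = a₇ = a₁₀ = 0, a₄ = a₈, a₂ = a₆, b₁a₄ = a₁₁, b₁a₂ = a₉. -/
theorem stmt_11 {k : Type*} [Field k] [CharP k 2]
    (a₁ a₂ a₃ a₄ a₅ a₆ a₇ a₈ a₉ a₁₀ a₁₁ b₁ : k)
    (H : Matrix (Fin 5) (Fin 5) k)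
    (hH : H = !![a₂, 0, a₁, a₇, a₆;
                 0, a₄, a₅, a₁₁, a₁₀;
                 a₄, a₂, a₃, a₉, a₈;
                 1, 0, 0, 0, 1;
                 0, 1, 0, b₁, 0])
    (hrank : H.rank ≤ 2) :
    a₁ = 0 ∧ a₃ = 0 ∧ a₅ = 0 ∧ a₇ = 0 ∧ a₁₀ = 0 ∧
      a₄ = a₈ ∧ a₂ = a₆ ∧ b₁ * a₄ = a₁₁ ∧ b₁ * a₂ = a₉ := by
  subst hH
  have d : ∀ (r c : Fin 3 → Fin 5),
      ((!![a₂, 0, a₁, a₇, a₆;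
           0, a₄, a₅, a₁₁, a₁₀;
           a₄, a₂, a₃, a₉, a₈;
           1, 0, 0, 0, 1;
           0, 1, 0, b₁, 0] : Matrix (Fin 5) (Fin 5) k).submatrix r c).det = 0 :=
    fun r c => aux_minor_det_zero r c _ hrank
  have d1 := d ![0,3,4] ![0,1,2]
  have d2 := d ![0,3,4] ![0,1,3]
  have d3 := d ![0,3,4] ![0,1,4]
  have d4 := d ![1,3,4] ![0,1,2]
  have d5 := d ![1,3,4] ![0,1,3]
  have d6 := d ![1,3,4] ![0,1,4]
  have d7 := d ![2,3,4] ![0,1,2]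
  have d8 := d ![2,3,4] ![0,1,3]
  have d9 := d ![2,3,4] ![0,1,4]
  rw [Matrix.det_fin_three] at d1 d2 d3 d4 d5 d6 d7 d8 d9
  simp [Matrix.det_fin_three, Matrix.submatrix_apply, Matrix.vecHead, Matrix.vecTail] at d1 d2 d3 d4 d5 d6 d7 d8 d9
  refine ⟨by linear_combination d1, by linear_combination d7, by linear_combination d4,
    by linear_combination d2, by linear_combination d6, by linear_combination -d9,
    by linear_combination -d3, by linear_combination -d5, by linear_combination -d8⟩
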